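/- arXiv:0806.2371 — 2 statements merged into one kernel-verified Lean document; each statement's English description precedes it below -/
import Mathlib

section
/- For N = 2n and r ≥ 1, the trace of the order-r transfer matrix T^{(r)}(θ) = ∑_{a=1}^{N} T^{(r)}_{aa}(θ), built via r-fold coproduct from the blocks T^{(1)}_{ab}(θ) = f_{ba}^{(+)}(θ)(ba) + f_{ba}^{(-)}(θ)(b̄ā) with f_{ba}^{(±)}(θ) = (1/2)(e^{m_{ba}^{(+)}θ} ± e^{m_{ba}^{(-)}θ}), equals 2∑_{i=1}^{n} e^{r·m_{ii}^{(+)}θ}. -/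
open Matrix

noncomputable section

/-- The `N × N` matrix unit `(ab)`. -/
def E {N : ℕ} (a b : Fin N) : Matrix (Fin N) (Fin N) ℂ := Matrix.single a b 1

/-- `f_{ba}^{(ε)}(θ) = (1/2)(e^{m_{ba}^{(+)}θ} ± e^{m_{ba}^{(-)}θ})`,
the sign `ε` coded by a Boolean (`true ↦ +`). -/
def f {N : ℕ} (m : Bool → Fin N → Fin N → ℝ) (ε : Bool) (b a : Fin N) (θ : ℝ) : ℂ :=
  (1 / 2 : ℂ) * ((Real.exp (m true b a * θ) : ℂ) +
    (if ε then 1 else -1) * (Real.exp (m false b a * θ) : ℂ))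

/-- The order-1 monodromy blocks
`T^{(1)}_{ab}(θ) = f_{ba}^{(+)}(θ)(ba) + f_{ba}^{(-)}(θ)(b̄ā)`. -/
def T1 {N : ℕ} (m : Bool → Fin N → Fin N → ℝ) (θ : ℝ) (a b : Fin N) :
    Matrix (Fin N) (Fin N) ℂ :=
  f m true b a θ • E b a + f m false b a θ • E b.rev a.rev

/-- Tensor product of an `N × N` matrix with a matrix on `(ℂ^N)^{⊗ r}`. -/
def tensorCons {N r : ℕ} (A : Matrix (Fin N) (Fin N) ℂ)
    (B : Matrix (Fin r → Fin N) (Fin r → Fin N) ℂ) :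
    Matrix (Fin (r + 1) → Fin N) (Fin (r + 1) → Fin N) ℂ :=
  fun x y => A (x 0) (y 0) * B (fun i => x i.succ) (fun i => y i.succ)

/-- The order-`r` monodromy blocks, built by the `r`-fold coproduct
`T^{(r)}_{ab} = ∑_{c₁,…,c_{r-1}} T^{(1)}_{ac₁} ⊗ T^{(1)}_{c₁c₂} ⊗ ⋯ ⊗ T^{(1)}_{c_{r-1}b}`. -/
def Trm {N : ℕ} (m : Bool → Fin N → Fin N → ℝ) (θ : ℝ) :
    (r : ℕ) → Fin N → Fin N → Matrix (Fin r → Fin N) (Fin r → Fin N) ℂ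
  | 0, a, b => if a = b then 1 else 0
  | r + 1, a, b => ∑ c : Fin N, tensorCons (T1 m θ a c) (Trm m θ r c b)

/-- Embedding of `{1,…,n}` into `{1,…,2n}`. -/
def emb {n : ℕ} (i : Fin n) : Fin (2 * n) := Fin.castLE (by omega) i

lemma trace_E {N : ℕ} (c a : Fin N) :
    ∑ x : Fin N, E c a x x = if c = a then (1:ℂ) else 0 := by
  simp only [E, Matrix.single, Matrix.of_apply]
  by_cases h : c = a
  · subst h; simp
  · rw [if_neg h, Finset.sum_eq_zero]
    intro x _
    rw [if_neg]
    rintro ⟨rfl, rfl⟩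
    exact h rfl

lemma trace_T1 {N : ℕ} (m : Bool → Fin N → Fin N → ℝ) (θ : ℝ) (a c : Fin N) :
    ∑ x : Fin N, T1 m θ a c x x =
      if c = a then f m true a a θ + f m false a a θ else 0 := by
  have h2 : ∑ x : Fin N, E c.rev a.rev x x = if c = a then (1:ℂ) else 0 := by
    rw [trace_E]; simp [Fin.rev_inj]
  simp only [T1, Matrix.add_apply, Matrix.smul_apply, smul_eq_mul, Finset.sum_add_distrib,
    ← Finset.mul_sum, trace_E, h2]
  by_cases h : c = a
  · subst h; simp
  · simp [h]

lemma trace_Trm {N : ℕ} (m : Bool → Fin N → Fin N → ℝ) (θ : ℝ) :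
    ∀ (r : ℕ) (a b : Fin N),
      ∑ x : Fin r → Fin N, Trm m θ r a b x x =
        if a = b then (f m true a a θ + f m false a a θ) ^ r else 0 := by
  intro r
  induction r with
  | zero =>
    intro a b
    by_cases h : a = b <;> simp [Trm, h, Matrix.one_apply]
  | succ r ih =>
    intro a b
    have split : ∀ (F : (Fin (r + 1) → Fin N) → ℂ),
        ∑ x : Fin (r + 1) → Fin N, F x = ∑ x0 : Fin N, ∑ xt : Fin r → Fin N,
          F (Fin.cons x0 xt) := by
      intro F
      rw [← Equiv.sum_comp (Fin.consEquiv (fun _ => Fin N)) F, Fintype.sum_prod_type]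
      rfl
    simp only [Trm, Matrix.sum_apply]
    rw [Finset.sum_comm]
    simp only [split]
    have : ∀ c : Fin N, ∑ x0 : Fin N, ∑ xt : Fin r → Fin N,
        tensorCons (T1 m θ a c) (Trm m θ r c b) (Fin.cons x0 xt) (Fin.cons x0 xt)
        = (if c = a then f m true a a θ + f m false a a θ else 0) *
          (if c = b then (f m true c c θ + f m false c c θ) ^ r else 0) := by
      intro c
      simp only [tensorCons, Fin.cons_zero, Fin.cons_succ]
      rw [← trace_T1 m θ a c, ← ih c b, Finset.sum_mul]
      congr 1
      ext x0
      rw [Finset.mul_sum]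
    simp only [this]
    rw [Finset.sum_eq_single a]
    · by_cases h : a = b <;> simp [h, pow_succ, mul_comm]
    · intro x _ hx; simp [hx]
    · intro h; simp at h

/-- For `N = 2n` and `r ≥ 1`, with parameters invariant under barring each index,
the order-`r` transfer matrix `𝐓^{(r)}(θ) = ∑_a T^{(r)}_{aa}(θ)` has trace
`2 ∑_{i=1}^n e^{r m_{ii}^{(+)} θ}`. -/
theorem stmt_9 (n : ℕ) (r : ℕ) (hr : 1 ≤ r)
    (m : Bool → Fin (2 * n) → Fin (2 * n) → ℝ)
    (hm : ∀ ε a b, m ε a b = m ε a.rev b ∧ m ε a b = m ε a b.rev) (θ : ℝ) :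
    Matrix.trace (∑ a : Fin (2 * n), Trm m θ r a a) =
      2 * ∑ i : Fin n, (Real.exp (r * m true (emb i) (emb i) * θ) : ℂ) := by
  have key : ∀ a : Fin (2 * n), ∑ x : Fin r → Fin (2 * n), Trm m θ r a a x x
      = (Real.exp (r * m true a a * θ) : ℂ) := by
    intro a
    rw [trace_Trm m θ r a a, if_pos rfl]
    have hf : f m true a a θ + f m false a a θ = (Real.exp (m true a a * θ) : ℂ) := by
      simp only [f]
      norm_num
      ring
    rw [hf]
    rw [show (r : ℝ) * m true a a * θ = (r : ℝ) * (m true a a * θ) by ring,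
      Real.exp_nat_mul]
    push_cast
    ring
  have tr : Matrix.trace (∑ a : Fin (2 * n), Trm m θ r a a)
      = ∑ a : Fin (2 * n), (Real.exp (r * m true a a * θ) : ℂ) := by
    rw [Matrix.trace_sum]
    exact Finset.sum_congr rfl fun a _ => (key a)
  rw [tr]
  have hrev : ∀ a : Fin (2 * n), m true a.rev a.rev = m true a a := by
    intro a
    rw [← (hm true a a.rev).1, ← (hm true a a).2]
  set F : Fin (2 * n) → ℂ := fun a => (Real.exp (r * m true a a * θ) : ℂ) with hF
  set e : Fin n ⊕ Fin n → Fin (2 * n) :=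
    Sum.elim (fun i => emb i) (fun i => (emb i).rev) with he
  have hinj : Function.Injective e := by
    have hv : ∀ i : Fin n, ((emb i : Fin (2 * n)) : ℕ) = i := fun i => rfl
    have hrv : ∀ i : Fin n, (((emb i).rev : Fin (2 * n)) : ℕ) = 2 * n - (i + 1) := by
      intro i; rw [Fin.val_rev, hv]
    rintro (i | i) (j | j) h
    · have h' : ((emb i : Fin (2 * n)) : ℕ) = ((emb j : Fin (2 * n)) : ℕ) :=
        congrArg Fin.val h
      rw [hv, hv] at h'
      exact congrArg Sum.inl (Fin.ext h')
    · have h' := congrArg Fin.val h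
      simp only [he, Sum.elim_inl, Sum.elim_inr] at h'
      rw [hv, hrv] at h'
      have := i.isLt; have := j.isLt; omega
    · have h' := congrArg Fin.val h
      simp only [he, Sum.elim_inl, Sum.elim_inr] at h'
      rw [hrv, hv] at h'
      have := i.isLt; have := j.isLt; omega
    · have h' := congrArg Fin.val h
      simp only [he, Sum.elim_inl, Sum.elim_inr] at h'
      rw [hrv, hrv] at h'
      have := i.isLt; have := j.isLt
      exact congrArg Sum.inr (Fin.ext (by omega))
  have hbij : Function.Bijective e :=
    (Fintype.bijective_iff_injective_and_card e).2 ⟨hinj, by simp; omega⟩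
  have hsum : ∑ s : Fin n ⊕ Fin n, F (e s) = ∑ a : Fin (2 * n), F a :=
    Fintype.sum_bijective e hbij _ _ (fun s => rfl)
  rw [← hsum, Fintype.sum_sum_type]
  have h2 : ∀ i : Fin n, F (e (Sum.inr i)) = F (e (Sum.inl i)) := by
    intro i
    simp only [he, hF, Sum.elim_inl, Sum.elim_inr, hrev]
  rw [Finset.sum_congr rfl (fun i _ => h2 i)]
  simp only [he, hF, Sum.elim_inl]
  ring
end
end

section
/- For N = 2n, i ≠ j in {1,...,n}, the vector |ij⟩ + c₂|īj̄⟩ + c₃|ji⟩ + c₄|j̄ī⟩ with (c₂,c₃,c₄) = (1,1,1) is an eigenvector of T^{(2)}(θ) with eigenvalue e^{(m_{ij}^{(+)}+m_{ji}^{(+)})θ}, and with (c₂,c₃,c₄) = (1,−1,−1) it is an eigenvector with eigenvalue −e^{(m_{ij}^{(+)}+m_{ji}^{(+)})θ}. -/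
open Matrix
open scoped Kronecker

noncomputable section

/-- `𝐓^{(2)}(θ) = ∑_a T^{(2)}_{aa}(θ) = ∑_a ∑_c T^{(1)}_{ac}(θ) ⊗ T^{(1)}_{ca}(θ)`. -/
def T2 {N : ℕ} (m : Bool → Fin N → Fin N → ℝ) (θ : ℝ) :
    Matrix (Fin N × Fin N) (Fin N × Fin N) ℂ :=
  ∑ a : Fin N, ∑ c : Fin N, T1 m θ a c ⊗ₖ T1 m θ c a

/-- The tensor-product basis vector `|b₁b₂⟩`. -/
def ket {N : ℕ} (b₁ b₂ : Fin N) : Fin N × Fin N → ℂ := Pi.single (b₁, b₂) 1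


lemma f_rev_left {N : ℕ} (m : Bool → Fin N → Fin N → ℝ)
    (hm : ∀ ε a b, m ε a b = m ε a.rev b ∧ m ε a b = m ε a b.rev) (ε : Bool) (a b : Fin N) (θ : ℝ) :
    f m ε a.rev b θ = f m ε a b θ := by
  unfold f; rw [← (hm true a b).1, ← (hm false a b).1]

lemma f_rev_right {N : ℕ} (m : Bool → Fin N → Fin N → ℝ)
    (hm : ∀ ε a b, m ε a b = m ε a.rev b ∧ m ε a b = m ε a b.rev) (ε : Bool) (a b : Fin N) (θ : ℝ) :
    f m ε a b.rev θ = f m ε a b θ := by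
  unfold f; rw [← (hm true a b).2, ← (hm false a b).2]

lemma sum_if_const {N : ℕ} {P : Prop} [Decidable P] (g : Fin N → ℂ) :
    ∑ x : Fin N, (if P then g x else 0) = if P then ∑ x : Fin N, g x else 0 := by
  split <;> simp

lemma key {N : ℕ} (m : Bool → Fin N → Fin N → ℝ)
    (hm : ∀ ε a b, m ε a b = m ε a.rev b ∧ m ε a b = m ε a b.rev) (θ : ℝ) (b₁ b₂ : Fin N) :
    (T2 m θ).mulVec (ket b₁ b₂) =
      (f m true b₂ b₁ θ * f m true b₁ b₂ θ + f m false b₂ b₁ θ * f m false b₁ b₂ θ) • ket b₂ b₁ +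
      (f m true b₂ b₁ θ * f m false b₁ b₂ θ + f m false b₂ b₁ θ * f m true b₁ b₂ θ) • ket b₂.rev b₁.rev := by
  funext pq
  obtain ⟨p, q⟩ := pq
  simp only [ket, Matrix.mulVec_single_one, Matrix.col_apply, mul_one]
  simp only [T2, T1, E, Matrix.sum_apply, Matrix.kroneckerMap_apply, Matrix.add_apply,
    Matrix.smul_apply, Matrix.single, Matrix.of_apply, smul_eq_mul,
    mul_ite, ite_mul, mul_zero, zero_mul, mul_one, ite_and, Fin.rev_eq_iff,
    add_mul, mul_add, Finset.sum_add_distrib, Finset.sum_ite_eq, Finset.sum_ite_eq',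
    Finset.mem_univ, if_true, Fin.rev_rev]
  simp only [sum_if_const, Finset.sum_ite_eq', Finset.mem_univ, if_true]
  simp only [f_rev_left m hm, f_rev_right m hm, Pi.add_apply, Pi.smul_apply, smul_eq_mul,
    Pi.single_apply, Prod.mk.injEq, ite_and, mul_ite, mul_zero, mul_one, Fin.rev_inj]
  have hl := f_rev_left m hm
  have hr := f_rev_right m hm
  clear hm
  split_ifs <;> subst_vars <;> (try simp only [hl, hr, Fin.rev_rev])
  any_goals ring
  any_goals contradiction
  any_goals (simp only [Fin.ext_iff, Fin.val_rev] at *; omega)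

/-- For `N = 2n` and `i ≠ j` in `{1,…,n}`, the vector
`|ij⟩ + |īj̄⟩ + c₃|ji⟩ + c₄|j̄ī⟩` is an eigenvector of `𝐓^{(2)}(θ)` with eigenvalue
`e^{(m_{ij}^{(+)}+m_{ji}^{(+)})θ}` for `(c₃,c₄) = (1,1)`, and with eigenvalue
`-e^{(m_{ij}^{(+)}+m_{ji}^{(+)})θ}` for `(c₃,c₄) = (-1,-1)`. -/
theorem stmt_13 (n : ℕ) (m : Bool → Fin (2 * n) → Fin (2 * n) → ℝ)
    (hm : ∀ ε a b, m ε a b = m ε a.rev b ∧ m ε a b = m ε a b.rev) (θ : ℝ)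
    (i j : Fin (2 * n)) (hi : (i : ℕ) < n) (hj : (j : ℕ) < n) (hij : i ≠ j) :
    (T2 m θ).mulVec (ket i j + ket i.rev j.rev + ket j i + ket j.rev i.rev) =
        (Real.exp ((m true i j + m true j i) * θ) : ℂ) •
          (ket i j + ket i.rev j.rev + ket j i + ket j.rev i.rev) ∧
      (T2 m θ).mulVec (ket i j + ket i.rev j.rev - ket j i - ket j.rev i.rev) =
        (-(Real.exp ((m true i j + m true j i) * θ) : ℂ)) •
          (ket i j + ket i.rev j.rev - ket j i - ket j.rev i.rev) := by
  have hl := f_rev_left m hm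
  have hr := f_rev_right m hm
  have hA : f m true j i θ * f m true i j θ + f m false j i θ * f m false i j θ +
      (f m true j i θ * f m false i j θ + f m false j i θ * f m true i j θ) =
      (Real.exp ((m true i j + m true j i) * θ) : ℂ) := by
    have h : Real.exp ((m true i j + m true j i) * θ) =
        Real.exp (m true j i * θ) * Real.exp (m true i j * θ) := by
      rw [← Real.exp_add]; ring_nf
    rw [h, Complex.ofReal_mul]
    simp only [f]
    norm_num
    ring
  constructor
  · simp only [Matrix.mulVec_add, key m hm, hl, hr, Fin.rev_rev]
    funext x
    simp only [Pi.add_apply, Pi.smul_apply, smul_eq_mul]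
    linear_combination (ket j i x + ket j.rev i.rev x) * hA +
      (ket i j x + ket i.rev j.rev x) * hA
  · simp only [Matrix.mulVec_add, Matrix.mulVec_sub, key m hm, hl, hr, Fin.rev_rev]
    funext x
    simp only [Pi.add_apply, Pi.sub_apply, Pi.smul_apply, smul_eq_mul]
    linear_combination (ket j i x + ket j.rev i.rev x) * hA -
      (ket i j x + ket i.rev j.rev x) * hA
end
end
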